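/- For positive integers p, q and integer k≥0, the reflection formula G_{k+3}(p-1,q) + (-1)^k G_{k+3}(q-1,p) = Σ_{a+b=k} (-1)^b ζ({1}^{p-1}, a+2) ζ({1}^{q-1}, b+2) holds. -/

import Mathlib

open scoped BigOperators

/-- Multiple zeta value ζ(α 0, ..., α (r-1)). -/
noncomputable def mzv {r : ℕ} (α : Fin r → ℕ) : ℝ :=
  ∑' f : {f : Fin r → ℕ // StrictMono f ∧ ∀ i, 0 < f i},
    ∏ i, ((f.1 i : ℝ) ^ (α i))⁻¹

/-- Multiple zeta-star value ζ*(α 0, ..., α (r-1)). -/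
noncomputable def mzs {r : ℕ} (α : Fin r → ℕ) : ℝ :=
  ∑' f : {f : Fin r → ℕ // Monotone f ∧ ∀ i, 0 < f i},
    ∏ i, ((f.1 i : ℝ) ^ (α i))⁻¹

/-- Riemann zeta value ζ(s) for integer s. -/
noncomputable def rz (s : ℕ) : ℝ := ∑' k : ℕ+, ((k : ℝ) ^ s)⁻¹

/-- The Euler sum G_{n+2}(p,q);  `G n p q` corresponds to G_{n+2}(p,q). -/
noncomputable def G (n p q : ℕ) : ℝ :=
  ∑' x : {fg : (Fin (p + 1) → ℕ) × (Fin q → ℕ) //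
      StrictMono fg.1 ∧ (∀ i, 0 < fg.1 i) ∧ Monotone fg.2 ∧
      (∀ j, 0 < fg.2 j) ∧ ∀ j, fg.2 j ≤ fg.1 (Fin.last p)},
    ((∏ i : Fin p, ((x.1.1 i.castSucc : ℝ))⁻¹) *
      ((x.1.1 (Fin.last p) : ℝ) ^ (n + 2))⁻¹) *
      ∏ j : Fin q, ((x.1.2 j : ℝ))⁻¹

/-- {1}^m : m repetitions of 1. -/
def ones (m : ℕ) : Fin m → ℕ := fun _ => 1
/-- {2}^m : m repetitions of 2. -/
def twos (m : ℕ) : Fin m → ℕ := fun _ => 2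
/-- the exponent string ({2}^a, 3, {2}^b). -/
def z23 (a b : ℕ) : Fin (a + 1 + b) → ℕ :=
  Fin.append (Fin.append (twos a) ![3]) (twos b)


/-- `aa r M` = sum over strictly increasing chains `k₁<...<k_r<M`, positive, of `1/(k₁⋯k_r)`,
with the convention that it is `0` for `M = 0`. -/
noncomputable def aa : ℕ → ℕ → ℝ
  | 0, M => if M = 0 then 0 else 1
  | (r+1), M => ∑ j ∈ Finset.Ioo 0 M, aa r j * (j : ℝ)⁻¹

/-- `ss q M` = sum over weakly increasing chains `ℓ₁≤...≤ℓ_q≤M`, positive, of `1/(ℓ₁⋯ℓ_q)`,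
with the convention that it is `0` for `M = 0`. -/
noncomputable def ss : ℕ → ℕ → ℝ
  | 0, M => if M = 0 then 0 else 1
  | (q+1), M => ∑ j ∈ Finset.Icc 1 M, ss q j * (j : ℝ)⁻¹

lemma aa_zero (r : ℕ) : aa r 0 = 0 := by cases r <;> simp [aa]

lemma ss_zero (q : ℕ) : ss q 0 = 0 := by cases q <;> simp [ss]

lemma aa_nonneg (r M : ℕ) : 0 ≤ aa r M := by
  induction r generalizing M with
  | zero => simp only [aa]; split <;> norm_num
  | succ r ih => exact Finset.sum_nonneg fun j _ => mul_nonneg (ih j) (by positivity)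

lemma ss_nonneg (q M : ℕ) : 0 ≤ ss q M := by
  induction q generalizing M with
  | zero => simp only [ss]; split <;> norm_num
  | succ q ih => exact Finset.sum_nonneg fun j _ => mul_nonneg (ih j) (by positivity)

lemma aa_le_ss (r M : ℕ) : aa r M ≤ ss r M := by
  induction r generalizing M with
  | zero => simp [aa, ss]
  | succ r ih =>
      show ∑ j ∈ Finset.Ioo 0 M, aa r j * (j : ℝ)⁻¹ ≤ ∑ j ∈ Finset.Icc 1 M, ss r j * (j : ℝ)⁻¹
      refine le_trans (Finset.sum_le_sum fun j _ => mul_le_mul_of_nonneg_right (ih j)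
        (by positivity)) ?_
      refine Finset.sum_le_sum_of_subset_of_nonneg ?_ fun j _ _ =>
        mul_nonneg (ss_nonneg r j) (by positivity)
      intro j hj
      simp only [Finset.mem_Ioo, Finset.mem_Icc] at hj ⊢
      omega

lemma sum_inv_sqrt_le (M : ℕ) :
    ∑ j ∈ Finset.Icc 1 M, (Real.sqrt j)⁻¹ ≤ 2 * Real.sqrt M := by
  induction M with
  | zero => simp
  | succ M ih =>
      rw [show Finset.Icc 1 (M+1) = insert (M+1) (Finset.Icc 1 M) by
        ext x; simp [Finset.mem_Icc]; omega, Finset.sum_insert (by simp)]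
      have h1 : Real.sqrt M ≥ 0 := Real.sqrt_nonneg _
      have h2 : Real.sqrt (M+1) > 0 := Real.sqrt_pos.2 (by positivity)
      have e1 : Real.sqrt M ^ 2 = (M : ℝ) := Real.sq_sqrt (by positivity)
      have e2 : Real.sqrt ((M : ℕ) + 1 : ℕ) ^ 2 = ((M : ℝ) + 1) := by
        push_cast
        exact Real.sq_sqrt (by positivity)
      have key : (Real.sqrt ((M : ℕ) + 1 : ℕ))⁻¹ + 2 * Real.sqrt M
          ≤ 2 * Real.sqrt ((M : ℕ) + 1 : ℕ) := by
        have h3 : (Real.sqrt ((M:ℕ)+1:ℕ))⁻¹ * Real.sqrt ((M:ℕ)+1:ℕ) = 1 :=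
          inv_mul_cancel₀ (ne_of_gt (by exact_mod_cast h2))
        nlinarith [sq_nonneg (Real.sqrt M - Real.sqrt ((M : ℕ) + 1 : ℕ)),
          Real.sqrt_nonneg ((M : ℕ) + 1 : ℕ), e2, mul_pos h2 h2]
      linarith [ih]

lemma ss_le (q M : ℕ) (hM : 1 ≤ M) : ss q M ≤ 2 ^ q * Real.sqrt M := by
  induction q generalizing M with
  | zero =>
      simp only [ss, pow_zero, one_mul]
      rw [if_neg (by omega)]
      exact Real.one_le_sqrt.2 (by exact_mod_cast hM)
  | succ q ih =>
      show ∑ j ∈ Finset.Icc 1 M, ss q j * (j : ℝ)⁻¹ ≤ _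
      have step : ∀ j ∈ Finset.Icc 1 M, ss q j * (j : ℝ)⁻¹ ≤ 2 ^ q * (Real.sqrt j)⁻¹ := by
        intro j hj
        simp only [Finset.mem_Icc] at hj
        have hj1 : (1:ℝ) ≤ j := by exact_mod_cast hj.1
        have : ss q j * (j : ℝ)⁻¹ ≤ (2 ^ q * Real.sqrt j) * (j : ℝ)⁻¹ :=
          mul_le_mul_of_nonneg_right (ih j hj.1) (by positivity)
        refine this.trans (le_of_eq ?_)
        rw [mul_assoc, ← div_eq_mul_inv, Real.sqrt_div_self', one_div]
      calc ∑ j ∈ Finset.Icc 1 M, ss q j * (j : ℝ)⁻¹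
          ≤ ∑ j ∈ Finset.Icc 1 M, 2 ^ q * (Real.sqrt j)⁻¹ := Finset.sum_le_sum step
        _ = 2 ^ q * ∑ j ∈ Finset.Icc 1 M, (Real.sqrt j)⁻¹ := by rw [Finset.mul_sum]
        _ ≤ 2 ^ q * (2 * Real.sqrt M) :=
            mul_le_mul_of_nonneg_left (sum_inv_sqrt_le M) (by positivity)
        _ = 2 ^ (q+1) * Real.sqrt M := by ring

lemma aa_le (r M : ℕ) (hM : 1 ≤ M) : aa r M ≤ 2 ^ r * Real.sqrt M :=
  (aa_le_ss r M).trans (ss_le r M hM)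

lemma shift_sum (f : ℕ → ℝ) (c M : ℕ) :
    ∑ m ∈ Finset.range M, f (c + m + 1) = ∑ i ∈ Finset.Ioc c (c + M), f i := by
  induction M with
  | zero => simp
  | succ M ih =>
      rw [Finset.sum_range_succ, ih,
        show Finset.Ioc c (c + (M+1)) = insert (c + M + 1) (Finset.Ioc c (c + M)) by
          ext x; simp [Finset.mem_Ioc]; omega,
        Finset.sum_insert (by simp)]
      ring

lemma Icc_one_eq_Ioc (M : ℕ) : Finset.Icc 1 M = Finset.Ioc 0 M := by
  ext x; simp [Finset.mem_Icc, Finset.mem_Ioc]; omega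

lemma shift_sum' (f : ℕ → ℝ) (c M : ℕ) :
    ∑ i ∈ Finset.Ioc c (c + M), f i = ∑ m ∈ Finset.Icc 1 M, f (c + m) := by
  rw [Icc_one_eq_Ioc, ← shift_sum f c M, ← Nat.zero_add M, ← shift_sum (fun i => f (c + i)) 0 M]
  simp [Nat.add_assoc]

open Filter Topology in
lemma tele (c d : ℕ) (hcd : c ≤ d) :
    HasSum (fun m : ℕ => ((m : ℝ) + c + 1)⁻¹ - ((m : ℝ) + d + 1)⁻¹)
      (∑ i ∈ Finset.Ioc c d, ((i : ℝ))⁻¹) := by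
  have hnonneg : ∀ m : ℕ, 0 ≤ ((m : ℝ) + c + 1)⁻¹ - ((m : ℝ) + d + 1)⁻¹ := by
    intro m
    have : ((m : ℝ) + c + 1) ≤ ((m : ℝ) + d + 1) := by
      have : (c:ℝ) ≤ d := by exact_mod_cast hcd
      linarith
    have h1 : (0:ℝ) < (m : ℝ) + c + 1 := by positivity
    have := inv_anti₀ h1 this
    linarith
  rw [hasSum_iff_tendsto_nat_of_nonneg hnonneg]
  have key : ∀ T : ℕ, ∑ m ∈ Finset.range T, (((m : ℝ) + c + 1)⁻¹ - ((m : ℝ) + d + 1)⁻¹)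
      = ∑ i ∈ Finset.Ioc c (c + T), ((i:ℝ))⁻¹ - ∑ i ∈ Finset.Ioc d (d + T), ((i:ℝ))⁻¹ := by
    intro T
    rw [Finset.sum_sub_distrib, ← shift_sum (fun i => (i:ℝ)⁻¹) c T,
      ← shift_sum (fun i => (i:ℝ)⁻¹) d T]
    congr 1 <;> · apply Finset.sum_congr rfl; intro m _; push_cast; ring_nf
  have key2 : ∀ T : ℕ, d - c ≤ T →
      ∑ i ∈ Finset.Ioc c (c + T), ((i:ℝ))⁻¹ - ∑ i ∈ Finset.Ioc d (d + T), ((i:ℝ))⁻¹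
      = ∑ i ∈ Finset.Ioc c d, ((i:ℝ))⁻¹ - ∑ i ∈ Finset.Ioc (c + T) (d + T), ((i:ℝ))⁻¹ := by
    intro T hT
    have h1 : c ≤ c + T := by omega
    have h2 : d ≤ c + T := by omega
    have e1 := Finset.sum_Ioc_consecutive (fun i => ((i:ℝ))⁻¹) hcd h2
    have e2 := Finset.sum_Ioc_consecutive (fun i => ((i:ℝ))⁻¹) h2 (show c + T ≤ d + T by omega)
    have e3 := Finset.sum_Ioc_consecutive (fun i => ((i:ℝ))⁻¹) h1 (show c + T ≤ d + T by omega)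
    -- e1 : Ioc c d + Ioc d (c+T) = Ioc c (c+T)
    -- e2 : Ioc d (c+T) + Ioc (c+T) (d+T) = Ioc d (d+T)
    linarith
  have hR : Tendsto (fun T : ℕ => ∑ i ∈ Finset.Ioc (c + T) (d + T), ((i:ℝ))⁻¹) atTop (𝓝 0) := by
    apply squeeze_zero (fun T => Finset.sum_nonneg fun i _ => by positivity)
      (g := fun T : ℕ => (d - c : ℕ) * ((T:ℝ) + c + 1)⁻¹)
    · intro T
      have : ∀ i ∈ Finset.Ioc (c + T) (d + T), ((i:ℝ))⁻¹ ≤ ((T:ℝ) + c + 1)⁻¹ := by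
        intro i hi
        simp only [Finset.mem_Ioc] at hi
        apply inv_anti₀ (by positivity)
        have : c + T + 1 ≤ i := by omega
        calc ((T:ℝ) + c + 1) = ((c + T + 1 : ℕ) : ℝ) := by push_cast; ring
          _ ≤ i := by exact_mod_cast this
      calc ∑ i ∈ Finset.Ioc (c + T) (d + T), ((i:ℝ))⁻¹
          ≤ (Finset.Ioc (c + T) (d + T)).card • ((T:ℝ) + c + 1)⁻¹ :=
            Finset.sum_le_card_nsmul _ _ _ this
        _ = (d - c : ℕ) * ((T:ℝ) + c + 1)⁻¹ := by
            rw [Nat.card_Ioc, nsmul_eq_mul]; congr 2; omega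
    · have h0 : Tendsto (fun T : ℕ => ((T:ℝ) + c + 1)⁻¹) atTop (𝓝 0) := by
        apply Tendsto.inv_tendsto_atTop
        apply tendsto_atTop_add_const_right
        apply tendsto_atTop_add_const_right
        exact tendsto_natCast_atTop_atTop
      simpa using h0.const_mul ((d - c : ℕ) : ℝ)
  have : Tendsto (fun T : ℕ => ∑ i ∈ Finset.Ioc c d, ((i:ℝ))⁻¹
      - ∑ i ∈ Finset.Ioc (c + T) (d + T), ((i:ℝ))⁻¹) atTop
      (𝓝 (∑ i ∈ Finset.Ioc c d, ((i:ℝ))⁻¹)) := by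
    simpa using (tendsto_const_nhds (x := ∑ i ∈ Finset.Ioc c d, ((i:ℝ))⁻¹)
      (f := atTop (α := ℕ))).sub hR
  apply Tendsto.congr' _ this
  filter_upwards [eventually_ge_atTop (d - c)] with T hT
  rw [key T, key2 T hT]


/-- bounded strict chains -/
def CS (r b : ℕ) : Type :=
  {g : Fin r → ℕ // StrictMono g ∧ (∀ i, 0 < g i) ∧ ∀ i, g i < b}

/-- bounded monotone chains -/
def DM (q b : ℕ) : Type :=
  {g : Fin q → ℕ // Monotone g ∧ (∀ j, 0 < g j) ∧ ∀ j, g j ≤ b}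

lemma snoc_strictMono {r : ℕ} {g : Fin r → ℕ} {M : ℕ}
    (hg : StrictMono g) (hlt : ∀ i, g i < M) : StrictMono (Fin.snoc g M) := by
  intro i j hij
  by_cases hj : j = Fin.last r
  · subst hj
    obtain ⟨i', rfl⟩ := Fin.exists_castSucc_eq.2 (Fin.ne_last_of_lt hij)
    simpa [Fin.snoc_castSucc, Fin.snoc_last] using hlt i'
  · obtain ⟨j', rfl⟩ := Fin.exists_castSucc_eq.2 hj
    obtain ⟨i', rfl⟩ := Fin.exists_castSucc_eq.2 (Fin.ne_last_of_lt (hij.trans_le (Fin.le_last _)))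
    simp only [Fin.snoc_castSucc]
    exact hg (by exact_mod_cast hij)

lemma snoc_monotone {q : ℕ} {g : Fin q → ℕ} {M : ℕ}
    (hg : Monotone g) (hle : ∀ i, g i ≤ M) : Monotone (Fin.snoc g M) := by
  intro i j hij
  by_cases hj : j = Fin.last q
  · subst hj
    by_cases hi : i = Fin.last q
    · subst hi; exact le_refl _
    · obtain ⟨i', rfl⟩ := Fin.exists_castSucc_eq.2 hi
      simpa [Fin.snoc_castSucc, Fin.snoc_last] using hle i'
  · obtain ⟨j', rfl⟩ := Fin.exists_castSucc_eq.2 hj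
    have hi : i ≠ Fin.last q := by
      rintro rfl
      exact hj (le_antisymm hij (Fin.le_last _)).symm
    obtain ⟨i', rfl⟩ := Fin.exists_castSucc_eq.2 hi
    simp only [Fin.snoc_castSucc]
    exact hg (by exact_mod_cast hij)

lemma init_strictMono {r : ℕ} {f : Fin (r+1) → ℕ} (hf : StrictMono f) :
    StrictMono (Fin.init f) := fun i j hij => hf (by simpa using hij)

lemma init_monotone {q : ℕ} {f : Fin (q+1) → ℕ} (hf : Monotone f) :
    Monotone (Fin.init f) := fun i j hij => hf (by simpa using hij)

lemma CS_heq {r b c : ℕ} (h : b = c) {x : CS r b} {y : CS r c} (hxy : x.1 = y.1) :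
    HEq x y := by subst h; exact heq_of_eq (Subtype.ext hxy)

lemma DM_heq {q b c : ℕ} (h : b = c) {x : DM q b} {y : DM q c} (hxy : x.1 = y.1) :
    HEq x y := by subst h; exact heq_of_eq (Subtype.ext hxy)

/-- peel the top element of a strict chain -/
def equivS (r : ℕ) (B : ℕ → Prop) (hB : ∀ {m n : ℕ}, m ≤ n → B n → B m) :
    {f : Fin (r+1) → ℕ // StrictMono f ∧ (∀ i, 0 < f i) ∧ ∀ i, B (f i)} ≃
      Σ M : {M : ℕ // 0 < M ∧ B M}, CS r M.1 where
  toFun f := ⟨⟨f.1 (Fin.last r), f.2.2.1 _, f.2.2.2 _⟩,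
    ⟨Fin.init f.1, init_strictMono f.2.1, fun i => f.2.2.1 _,
      fun i => f.2.1 (Fin.castSucc_lt_last i)⟩⟩
  invFun x := ⟨Fin.snoc x.2.1 x.1.1,
    snoc_strictMono x.2.2.1 x.2.2.2.2,
    by
      intro i
      by_cases hi : i = Fin.last r
      · subst hi; simpa using x.1.2.1
      · obtain ⟨i', rfl⟩ := Fin.exists_castSucc_eq.2 hi
        simpa using x.2.2.2.1 i',
    by
      intro i
      by_cases hi : i = Fin.last r
      · subst hi; simpa using x.1.2.2
      · obtain ⟨i', rfl⟩ := Fin.exists_castSucc_eq.2 hi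
        simp only [Fin.snoc_castSucc]
        exact hB (le_of_lt (x.2.2.2.2 i')) x.1.2.2⟩
  left_inv f := by
    apply Subtype.ext
    exact Fin.snoc_init_self f.1
  right_inv x := by
    rcases x with ⟨M, g⟩
    refine Sigma.ext ?_ ?_
    · apply Subtype.ext
      simp [Fin.snoc_last]
    · exact CS_heq (by simp [Fin.snoc_last]) (by simp [Fin.init_snoc])

/-- peel the top element of a monotone chain -/
def equivM (q : ℕ) (B : ℕ → Prop) (hB : ∀ {m n : ℕ}, m ≤ n → B n → B m) :
    {f : Fin (q+1) → ℕ // Monotone f ∧ (∀ i, 0 < f i) ∧ ∀ i, B (f i)} ≃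
      Σ M : {M : ℕ // 0 < M ∧ B M}, DM q M.1 where
  toFun f := ⟨⟨f.1 (Fin.last q), f.2.2.1 _, f.2.2.2 _⟩,
    ⟨Fin.init f.1, init_monotone f.2.1, fun i => f.2.2.1 _,
      fun i => f.2.1 (le_of_lt (Fin.castSucc_lt_last i))⟩⟩
  invFun x := ⟨Fin.snoc x.2.1 x.1.1,
    snoc_monotone x.2.2.1 x.2.2.2.2,
    by
      intro i
      by_cases hi : i = Fin.last q
      · subst hi; simpa using x.1.2.1
      · obtain ⟨i', rfl⟩ := Fin.exists_castSucc_eq.2 hi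
        simpa using x.2.2.2.1 i',
    by
      intro i
      by_cases hi : i = Fin.last q
      · subst hi; simpa using x.1.2.2
      · obtain ⟨i', rfl⟩ := Fin.exists_castSucc_eq.2 hi
        simp only [Fin.snoc_castSucc]
        exact hB (x.2.2.2.2 i') x.1.2.2⟩
  left_inv f := by
    apply Subtype.ext
    exact Fin.snoc_init_self f.1
  right_inv x := by
    rcases x with ⟨M, g⟩
    refine Sigma.ext ?_ ?_
    · apply Subtype.ext
      simp [Fin.snoc_last]
    · exact DM_heq (by simp [Fin.snoc_last]) (by simp [Fin.init_snoc])

instance (r b : ℕ) : Finite (CS r b) := by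
  apply Finite.of_injective (fun g : CS r b => (fun i => (⟨g.1 i, g.2.2.2 i⟩ : Fin b)))
  intro g h hgh
  apply Subtype.ext
  funext i
  exact congrArg Fin.val (congrFun hgh i)

instance (q b : ℕ) : Finite (DM q b) := by
  apply Finite.of_injective
    (fun g : DM q b => (fun i => (⟨g.1 i, Nat.lt_succ_of_le (g.2.2.2 i)⟩ : Fin (b+1))))
  intro g h hgh
  apply Subtype.ext
  funext i
  exact congrArg Fin.val (congrFun hgh i)

instance (b : ℕ) : Finite {M : ℕ // 0 < M ∧ M < b} := by
  apply Finite.of_injective (fun M : {M : ℕ // 0 < M ∧ M < b} => (⟨M.1, M.2.2⟩ : Fin b))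
  intro M N h
  exact Subtype.ext (congrArg Fin.val h)

instance (b : ℕ) : Finite {M : ℕ // 0 < M ∧ M ≤ b} := by
  apply Finite.of_injective
    (fun M : {M : ℕ // 0 < M ∧ M ≤ b} => (⟨M.1, Nat.lt_succ_of_le M.2.2⟩ : Fin (b+1)))
  intro M N h
  exact Subtype.ext (congrArg Fin.val h)

noncomputable instance (r b : ℕ) : Fintype (CS r b) := Fintype.ofFinite _
noncomputable instance (q b : ℕ) : Fintype (DM q b) := Fintype.ofFinite _
noncomputable instance (b : ℕ) : Fintype {M : ℕ // 0 < M ∧ M < b} := Fintype.ofFinite _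
noncomputable instance (b : ℕ) : Fintype {M : ℕ // 0 < M ∧ M ≤ b} := Fintype.ofFinite _

instance (b : ℕ) : Unique (CS 0 b) :=
  ⟨⟨⟨fun (i : Fin 0) => i.elim0, fun (i : Fin 0) _ _ => i.elim0,
    fun (i : Fin 0) => i.elim0, fun (i : Fin 0) => i.elim0⟩⟩,
    fun g => Subtype.ext (funext fun (i : Fin 0) => i.elim0)⟩

instance (b : ℕ) : Unique (DM 0 b) :=
  ⟨⟨⟨fun (i : Fin 0) => i.elim0, fun (i : Fin 0) _ _ => i.elim0,
    fun (i : Fin 0) => i.elim0, fun (i : Fin 0) => i.elim0⟩⟩,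
    fun g => Subtype.ext (funext fun (i : Fin 0) => i.elim0)⟩

/-- the peeling equivalence for `CS` -/
def eS (r b : ℕ) : CS (r+1) b ≃ Σ M : {M : ℕ // 0 < M ∧ M < b}, CS r M.1 :=
  equivS r (fun x => x < b) (fun {m n} hmn hn => lt_of_le_of_lt hmn hn)

lemma eS_symm_fst (r b : ℕ) (x : Σ M : {M : ℕ // 0 < M ∧ M < b}, CS r M.1) :
    ((eS r b).symm x).1 = Fin.snoc x.2.1 x.1.1 := rfl

/-- the peeling equivalence for `DM` -/
def eM (q b : ℕ) : DM (q+1) b ≃ Σ M : {M : ℕ // 0 < M ∧ M ≤ b}, DM q M.1 :=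
  equivM q (fun x => x ≤ b) (fun {m n} hmn hn => le_trans hmn hn)

lemma eM_symm_fst (q b : ℕ) (x : Σ M : {M : ℕ // 0 < M ∧ M ≤ b}, DM q M.1) :
    ((eM q b).symm x).1 = Fin.snoc x.2.1 x.1.1 := rfl

lemma CS_sum (r : ℕ) : ∀ b : ℕ, 0 < b →
    ∑ g : CS r b, ∏ i, ((g.1 i : ℝ))⁻¹ = aa r b := by
  induction r with
  | zero =>
      intro b hb
      rw [Fintype.sum_unique]
      simp [aa, Nat.pos_iff_ne_zero.1 hb]
  | succ r ih =>
      intro b hb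
      set e := eS r b with he
      rw [Fintype.sum_equiv e _ (fun x => ∏ i, (((e.symm x).1 i : ℝ))⁻¹)
        (fun f => by simp only [Equiv.symm_apply_apply])]
      rw [← Finset.univ_sigma_univ, Finset.sum_sigma]
      have inner : ∀ M : {M : ℕ // 0 < M ∧ M < b}, ∀ g : CS r M.1,
          (∏ i, (((e.symm ⟨M, g⟩).1 i : ℝ))⁻¹) =
            (∏ i, ((g.1 i : ℝ))⁻¹) * ((M.1 : ℝ))⁻¹ := by
        intro M g
        rw [he, eS_symm_fst r b ⟨M, g⟩, Fin.prod_univ_castSucc]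
        simp [Fin.snoc_castSucc, Fin.snoc_last]
      calc ∑ M : {M : ℕ // 0 < M ∧ M < b}, ∑ g : CS r M.1,
            ∏ i, (((e.symm ⟨M, g⟩).1 i : ℝ))⁻¹
          = ∑ M : {M : ℕ // 0 < M ∧ M < b}, aa r M.1 * ((M.1 : ℝ))⁻¹ := by
            apply Finset.sum_congr rfl
            intro M _
            rw [Finset.sum_congr rfl (fun g _ => inner M g), ← Finset.sum_mul, ih M.1 M.2.1]
        _ = ∑ j ∈ Finset.Ioo 0 b, aa r j * ((j : ℝ))⁻¹ := by
            rw [Finset.sum_subtype (p := fun j => 0 < j ∧ j < b) (Finset.Ioo 0 b)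
              (fun j => by simp [Finset.mem_Ioo]) (fun j => aa r j * ((j : ℝ))⁻¹)]
        _ = aa (r+1) b := rfl

lemma DM_sum (q : ℕ) : ∀ b : ℕ, 0 < b →
    ∑ g : DM q b, ∏ i, ((g.1 i : ℝ))⁻¹ = ss q b := by
  induction q with
  | zero =>
      intro b hb
      rw [Fintype.sum_unique]
      simp [ss, Nat.pos_iff_ne_zero.1 hb]
  | succ q ih =>
      intro b hb
      set e := eM q b with he
      rw [Fintype.sum_equiv e _ (fun x => ∏ i, (((e.symm x).1 i : ℝ))⁻¹)
        (fun f => by simp only [Equiv.symm_apply_apply])]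
      rw [← Finset.univ_sigma_univ, Finset.sum_sigma]
      have inner : ∀ M : {M : ℕ // 0 < M ∧ M ≤ b}, ∀ g : DM q M.1,
          (∏ i, (((e.symm ⟨M, g⟩).1 i : ℝ))⁻¹) =
            (∏ i, ((g.1 i : ℝ))⁻¹) * ((M.1 : ℝ))⁻¹ := by
        intro M g
        rw [he, eM_symm_fst q b ⟨M, g⟩, Fin.prod_univ_castSucc]
        simp [Fin.snoc_castSucc, Fin.snoc_last]
      calc ∑ M : {M : ℕ // 0 < M ∧ M ≤ b}, ∑ g : DM q M.1,
            ∏ i, (((e.symm ⟨M, g⟩).1 i : ℝ))⁻¹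
          = ∑ M : {M : ℕ // 0 < M ∧ M ≤ b}, ss q M.1 * ((M.1 : ℝ))⁻¹ := by
            apply Finset.sum_congr rfl
            intro M _
            rw [Finset.sum_congr rfl (fun g _ => inner M g), ← Finset.sum_mul, ih M.1 M.2.1]
        _ = ∑ j ∈ Finset.Icc 1 b, ss q j * ((j : ℝ))⁻¹ := by
            rw [Finset.sum_subtype (p := fun j => 0 < j ∧ j ≤ b) (Finset.Icc 1 b)
              (fun j => by simp [Finset.mem_Icc]; omega) (fun j => ss q j * ((j : ℝ))⁻¹)]
        _ = ss (q+1) b := rfl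

lemma sqrt_mul_inv_pow {M : ℕ} (hM : 0 < M) :
    Real.sqrt M * (((M:ℝ))^(2:ℕ))⁻¹ = (((M:ℝ)) ^ ((3:ℝ)/2))⁻¹ := by
  have hM' : (0:ℝ) < M := by exact_mod_cast hM
  rw [Real.sqrt_eq_rpow,
    show (((M:ℝ))^(2:ℕ))⁻¹ = (M:ℝ) ^ (-2:ℝ) by
      rw [← Real.rpow_natCast (M:ℝ) 2, ← Real.rpow_neg hM'.le]; norm_num,
    show (((M:ℝ)) ^ ((3:ℝ)/2))⁻¹ = (M:ℝ) ^ (-(3:ℝ)/2) by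
      rw [← Real.rpow_neg hM'.le]; norm_num,
    ← Real.rpow_add hM']
  norm_num

lemma summable_aa_pow (r n : ℕ) (hn : 2 ≤ n) :
    Summable (fun M : ℕ => aa r M * (((M:ℝ))^n)⁻¹) := by
  have hg : Summable (fun M : ℕ => (2:ℝ)^r * (((M:ℝ)) ^ ((3:ℝ)/2))⁻¹) :=
    (Real.summable_nat_rpow_inv.2 (by norm_num)).mul_left _
  have hnn : ∀ M : ℕ, 0 ≤ aa r M * (((M:ℝ))^n)⁻¹ :=
    fun M => mul_nonneg (aa_nonneg r M) (by positivity)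
  have hle : ∀ M : ℕ, aa r M * (((M:ℝ))^n)⁻¹ ≤ (2:ℝ)^r * (((M:ℝ)) ^ ((3:ℝ)/2))⁻¹ := by
    intro M
    rcases Nat.eq_zero_or_pos M with rfl | hM
    · simp [aa_zero]
    · have hM1 : (1:ℝ) ≤ M := by exact_mod_cast hM
      calc aa r M * (((M:ℝ))^n)⁻¹ ≤ (2^r * Real.sqrt M) * (((M:ℝ))^(2:ℕ))⁻¹ := by
            apply mul_le_mul (aa_le r M hM) ?_ (by positivity) (by positivity)
            apply inv_anti₀ (by positivity)
            exact pow_le_pow_right₀ hM1 hn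
        _ = 2^r * (((M:ℝ)) ^ ((3:ℝ)/2))⁻¹ := by
            rw [mul_assoc, sqrt_mul_inv_pow hM]
  exact Summable.of_nonneg_of_le hnn hle hg

lemma summable_aass (r q n : ℕ) (hn : 2 ≤ n) :
    Summable (fun M : ℕ => aa r M * (((M:ℝ))^(n+1))⁻¹ * ss q M) := by
  have hg : Summable (fun M : ℕ => ((2:ℝ)^r * 2^q) * (((M:ℝ))^(2:ℕ))⁻¹) := by
    apply Summable.mul_left
    have := Real.summable_one_div_nat_pow.2 (show 1 < 2 by norm_num)
    simpa [one_div] using this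
  have hnn : ∀ M : ℕ, 0 ≤ aa r M * (((M:ℝ))^(n+1))⁻¹ * ss q M :=
    fun M => mul_nonneg (mul_nonneg (aa_nonneg r M) (by positivity)) (ss_nonneg q M)
  have hle : ∀ M : ℕ, aa r M * (((M:ℝ))^(n+1))⁻¹ * ss q M
      ≤ ((2:ℝ)^r * 2^q) * (((M:ℝ))^(2:ℕ))⁻¹ := by
    intro M
    rcases Nat.eq_zero_or_pos M with rfl | hM
    · simp [aa_zero]
    · have hM1 : (1:ℝ) ≤ M := by exact_mod_cast hM
      have hM' : (0:ℝ) < M := by exact_mod_cast hM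
      have h1 : aa r M * (((M:ℝ))^(n+1))⁻¹ * ss q M
          ≤ (2^r * Real.sqrt M) * (((M:ℝ))^(n+1))⁻¹ * (2^q * Real.sqrt M) := by
        apply mul_le_mul ?_ (ss_le q M hM) (ss_nonneg q M) (by positivity)
        exact mul_le_mul_of_nonneg_right (aa_le r M hM) (by positivity)
      refine h1.trans ?_
      have h2 : Real.sqrt M * Real.sqrt M = (M:ℝ) := Real.mul_self_sqrt hM'.le
      have h3 : (((M:ℝ))^(n+1))⁻¹ ≤ (((M:ℝ))^(3:ℕ))⁻¹ := by
        apply inv_anti₀ (by positivity)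
        exact pow_le_pow_right₀ hM1 (by omega)
      have hMne : ((M:ℝ)) ≠ 0 := ne_of_gt hM'
      calc (2^r * Real.sqrt M) * (((M:ℝ))^(n+1))⁻¹ * (2^q * Real.sqrt M)
          = (2^r * 2^q) * ((Real.sqrt M * Real.sqrt M) * (((M:ℝ))^(n+1))⁻¹) := by ring
        _ = (2^r * 2^q) * ((M:ℝ) * (((M:ℝ))^(n+1))⁻¹) := by rw [h2]
        _ ≤ (2^r * 2^q) * ((M:ℝ) * (((M:ℝ))^(3:ℕ))⁻¹) := by
            apply mul_le_mul_of_nonneg_left (mul_le_mul_of_nonneg_left h3 hM'.le)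
              (by positivity)
        _ = (2^r * 2^q) * (((M:ℝ))^(2:ℕ))⁻¹ := by
            congr 1
            rw [show ((M:ℝ))^(3:ℕ) = (M:ℝ) * ((M:ℝ))^(2:ℕ) by ring, mul_inv, ← mul_assoc,
              mul_inv_cancel₀ hMne, one_mul]
  exact Summable.of_nonneg_of_le hnn hle hg


/-- the main equivalence for `mzv` sums -/
def eZ (r : ℕ) : {f : Fin (r+1) → ℕ // StrictMono f ∧ ∀ i, 0 < f i} ≃
    Σ M : {M : ℕ // 0 < M ∧ True}, CS r M.1 :=
  (Equiv.subtypeEquivRight (fun f => by simp)).trans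
    (equivS r (fun _ => True) (fun {m n} _ _ => trivial))

lemma eZ_symm_fst (r : ℕ) (x : Σ M : {M : ℕ // 0 < M ∧ True}, CS r M.1) :
    ((eZ r).symm x).1 = Fin.snoc x.2.1 x.1.1 := rfl

lemma mzv_snoc (r n : ℕ) (hn : 2 ≤ n) :
    mzv (Fin.snoc (ones r) n) = ∑' M : ℕ, aa r M * (((M:ℝ))^n)⁻¹ := by
  classical
  set F : (Σ M : {M : ℕ // 0 < M ∧ True}, CS r M.1) → ℝ :=
    fun x => (∏ i : Fin r, ((x.2.1 i : ℝ))⁻¹) * (((x.1.1:ℝ))^n)⁻¹ with hF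
  have key : ∀ x : Σ M : {M : ℕ // 0 < M ∧ True}, CS r M.1,
      (∏ i, ((((eZ r).symm x).1 i : ℝ) ^ ((Fin.snoc (ones r) n : Fin (r+1) → ℕ) i))⁻¹)
        = F x := by
    intro x
    have h1 : ((eZ r).symm x).1 = Fin.snoc x.2.1 x.1.1 := eZ_symm_fst r x
    rw [h1, Fin.prod_univ_castSucc]
    simp [Fin.snoc_castSucc, Fin.snoc_last, ones, hF]
  have hfib : ∀ M : {M : ℕ // 0 < M ∧ True},
      ∑' g : CS r M.1, F ⟨M, g⟩ = aa r M.1 * (((M.1:ℝ))^n)⁻¹ := by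
    intro M
    rw [tsum_fintype]
    simp only [hF]
    rw [← Finset.sum_mul, CS_sum r M.1 M.2.1]
  have hfibfun : (fun M : {M : ℕ // 0 < M ∧ True} => ∑' g : CS r M.1, F ⟨M, g⟩)
      = fun M => aa r M.1 * (((M.1:ℝ))^n)⁻¹ := funext hfib
  have hsummF : Summable F := by
    apply (summable_sigma_of_nonneg ?_).2 ⟨fun M => (hasSum_fintype _).summable, ?_⟩
    · intro x
      apply mul_nonneg (Finset.prod_nonneg fun i _ => by positivity) (by positivity)
    · rw [hfibfun]
      exact (summable_aa_pow r n hn).comp_injective Subtype.val_injective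
  have h1 : mzv (Fin.snoc (ones r) n) = ∑' x, F x := by
    rw [mzv, ← Equiv.tsum_eq (eZ r).symm
      (fun f : {f : Fin (r+1) → ℕ // StrictMono f ∧ ∀ i, 0 < f i} =>
        ∏ i, ((f.1 i : ℝ) ^ ((Fin.snoc (ones r) n : Fin (r+1) → ℕ) i))⁻¹)]
    exact tsum_congr key
  have h2 : ∑' x, F x = ∑' M : {M : ℕ // 0 < M ∧ True}, aa r M.1 * (((M.1:ℝ))^n)⁻¹ := by
    rw [Summable.tsum_sigma hsummF, hfibfun]
  have h3 : ∑' M : {M : ℕ // 0 < M ∧ True}, aa r M.1 * (((M.1:ℝ))^n)⁻¹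
      = ∑' M : ℕ, aa r M * (((M:ℝ))^n)⁻¹ := by
    refine Eq.trans (tsum_subtype {M : ℕ | 0 < M ∧ True}
      (fun M => aa r M * (((M:ℝ))^n)⁻¹)) ?_
    apply tsum_congr
    intro M
    by_cases hM : M ∈ {M : ℕ | 0 < M ∧ True}
    · rw [Set.indicator_of_mem hM]
    · rw [Set.indicator_of_notMem hM]
      have : M = 0 := by simpa using hM
      subst this
      rw [aa_zero, zero_mul]
  rw [h1, h2, h3]

lemma CSDM_heq {r q b c : ℕ} (h : b = c) {x : CS r b × DM q b} {y : CS r c × DM q c}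
    (h1 : x.1.1 = y.1.1) (h2 : x.2.1 = y.2.1) : HEq x y := by
  subst h
  exact heq_of_eq (Prod.ext (Subtype.ext h1) (Subtype.ext h2))

/-- the main equivalence for `G` sums -/
def eG (r q : ℕ) :
    {fg : (Fin (r + 1) → ℕ) × (Fin q → ℕ) //
      StrictMono fg.1 ∧ (∀ i, 0 < fg.1 i) ∧ Monotone fg.2 ∧
      (∀ j, 0 < fg.2 j) ∧ ∀ j, fg.2 j ≤ fg.1 (Fin.last r)} ≃
    Σ M : {M : ℕ // 0 < M}, CS r M.1 × DM q M.1 where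
  toFun x := ⟨⟨x.1.1 (Fin.last r), x.2.2.1 _⟩,
    (⟨Fin.init x.1.1, init_strictMono x.2.1, fun i => x.2.2.1 _,
       fun i => x.2.1 (Fin.castSucc_lt_last i)⟩,
     ⟨x.1.2, x.2.2.2.1, x.2.2.2.2.1, x.2.2.2.2.2⟩)⟩
  invFun y := ⟨(Fin.snoc y.2.1.1 y.1.1, y.2.2.1),
    snoc_strictMono y.2.1.2.1 y.2.1.2.2.2,
    by
      intro i
      by_cases hi : i = Fin.last r
      · subst hi; simpa using y.1.2
      · obtain ⟨i', rfl⟩ := Fin.exists_castSucc_eq.2 hi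
        simpa using y.2.1.2.2.1 i',
    y.2.2.2.1,
    y.2.2.2.2.1,
    by
      intro j
      simpa [Fin.snoc_last] using y.2.2.2.2.2 j⟩
  left_inv x := Subtype.ext (Prod.ext (Fin.snoc_init_self x.1.1) rfl)
  right_inv y := by
    rcases y with ⟨M, c, d⟩
    refine Sigma.ext (Subtype.ext (by simp [Fin.snoc_last])) ?_
    exact CSDM_heq (by simp [Fin.snoc_last]) (by simp [Fin.init_snoc]) rfl

lemma eG_symm_fst (r q : ℕ) (y : Σ M : {M : ℕ // 0 < M}, CS r M.1 × DM q M.1) :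
    ((eG r q).symm y).1 = (Fin.snoc y.2.1.1 y.1.1, y.2.2.1) := rfl

lemma G_eq (n r q : ℕ) (hn : 1 ≤ n) :
    G n r q = ∑' M : ℕ, aa r M * (((M:ℝ))^(n+2))⁻¹ * ss q M := by
  classical
  set F : (Σ M : {M : ℕ // 0 < M}, CS r M.1 × DM q M.1) → ℝ :=
    fun x => ((∏ i : Fin r, ((x.2.1.1 i : ℝ))⁻¹) * (((x.1.1:ℝ))^(n+2))⁻¹) *
      ∏ j : Fin q, ((x.2.2.1 j : ℝ))⁻¹ with hF
  have key : ∀ y : Σ M : {M : ℕ // 0 < M}, CS r M.1 × DM q M.1,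
      ((∏ i : Fin r, ((((eG r q).symm y).1.1 i.castSucc : ℝ))⁻¹) *
        ((((eG r q).symm y).1.1 (Fin.last r) : ℝ) ^ (n + 2))⁻¹) *
        ∏ j : Fin q, ((((eG r q).symm y).1.2 j : ℝ))⁻¹ = F y := by
    intro y
    have h1 : ((eG r q).symm y).1 = (Fin.snoc y.2.1.1 y.1.1, y.2.2.1) := eG_symm_fst r q y
    rw [h1]
    simp [Fin.snoc_castSucc, Fin.snoc_last, hF]
  have hfib : ∀ M : {M : ℕ // 0 < M},
      ∑' cd : CS r M.1 × DM q M.1, F ⟨M, cd⟩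
        = aa r M.1 * (((M.1:ℝ))^(n+2))⁻¹ * ss q M.1 := by
    intro M
    rw [tsum_fintype]
    simp only [hF]
    rw [Fintype.sum_prod_type]
    calc ∑ c : CS r M.1, ∑ d : DM q M.1,
          ((∏ i : Fin r, ((c.1 i : ℝ))⁻¹) * (((M.1:ℝ))^(n+2))⁻¹) *
            ∏ j : Fin q, ((d.1 j : ℝ))⁻¹
        = ∑ c : CS r M.1, ((∏ i : Fin r, ((c.1 i : ℝ))⁻¹) * (((M.1:ℝ))^(n+2))⁻¹) *
            ∑ d : DM q M.1, ∏ j : Fin q, ((d.1 j : ℝ))⁻¹ := by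
          apply Finset.sum_congr rfl
          intro c _
          rw [Finset.mul_sum]
      _ = (∑ c : CS r M.1, ∏ i : Fin r, ((c.1 i : ℝ))⁻¹) * (((M.1:ℝ))^(n+2))⁻¹ *
            ∑ d : DM q M.1, ∏ j : Fin q, ((d.1 j : ℝ))⁻¹ := by
          rw [← Finset.sum_mul, ← Finset.sum_mul]
      _ = aa r M.1 * (((M.1:ℝ))^(n+2))⁻¹ * ss q M.1 := by
          rw [CS_sum r M.1 M.2, DM_sum q M.1 M.2]
  have hfibfun : (fun M : {M : ℕ // 0 < M} => ∑' cd : CS r M.1 × DM q M.1, F ⟨M, cd⟩)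
      = fun M => aa r M.1 * (((M.1:ℝ))^(n+2))⁻¹ * ss q M.1 := funext hfib
  have hsummF : Summable F := by
    apply (summable_sigma_of_nonneg ?_).2 ⟨fun M => (hasSum_fintype _).summable, ?_⟩
    · intro x
      apply mul_nonneg (mul_nonneg (Finset.prod_nonneg fun i _ => by positivity)
        (by positivity)) (Finset.prod_nonneg fun j _ => by positivity)
    · rw [hfibfun]
      have : Summable (fun M : ℕ => aa r M * (((M:ℝ))^(n+2))⁻¹ * ss q M) := by
        have := summable_aass r q (n+1) (by omega)
        simpa using this
      exact this.comp_injective Subtype.val_injective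
  have h1 : G n r q = ∑' y, F y := by
    rw [G, ← Equiv.tsum_eq (eG r q).symm]
    exact tsum_congr key
  have h2 : ∑' y, F y = ∑' M : {M : ℕ // 0 < M}, aa r M.1 * (((M.1:ℝ))^(n+2))⁻¹ * ss q M.1 := by
    rw [Summable.tsum_sigma hsummF, hfibfun]
  have h3 : ∑' M : {M : ℕ // 0 < M}, aa r M.1 * (((M.1:ℝ))^(n+2))⁻¹ * ss q M.1
      = ∑' M : ℕ, aa r M * (((M:ℝ))^(n+2))⁻¹ * ss q M := by
    refine Eq.trans (tsum_subtype {M : ℕ | 0 < M}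
      (fun M => aa r M * (((M:ℝ))^(n+2))⁻¹ * ss q M)) ?_
    apply tsum_congr
    intro M
    by_cases hM : M ∈ {M : ℕ | 0 < M}
    · rw [Set.indicator_of_mem hM]
    · rw [Set.indicator_of_notMem hM]
      have : M = 0 := by simpa using hM
      subst this
      rw [aa_zero, zero_mul, zero_mul]
  rw [h1, h2, h3]

/-- group pairs by the diagonal -/
def e3 : (Σ N : ℕ, Fin N) ≃ ℕ × ℕ where
  toFun x := (x.2.1, x.1 - x.2.1 - 1)
  invFun p := ⟨p.1 + p.2 + 1, ⟨p.1, by omega⟩⟩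
  left_inv x := by
    rcases x with ⟨N, i⟩
    have hi : i.1 < N := i.2
    refine Sigma.ext (by dsimp only; omega) ((Fin.heq_ext_iff (by dsimp only; omega)).2 rfl)
  right_inv p := by
    rcases p with ⟨a, b⟩
    dsimp only
    congr 1
    omega

lemma winv {M N : ℕ} (hM : 1 ≤ M) (hN : 0 < N) :
    ((M:ℝ))⁻¹ * (((N:ℝ))⁻¹ - ((N:ℝ)+M)⁻¹) = (N:ℝ)⁻¹ * ((N:ℝ)+M)⁻¹ := by
  have hM' : (0:ℝ) < M := by exact_mod_cast hM
  have hN' : (0:ℝ) < N := by exact_mod_cast hN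
  have hNM : (0:ℝ) < (N:ℝ) + M := by linarith
  field_simp
  try ring

lemma lemL (r : ℕ) : ∀ M : ℕ, 1 ≤ M →
    HasSum (fun N : ℕ => aa r N * ((N:ℝ)⁻¹ * ((N:ℝ)+M)⁻¹)) (ss (r+1) M * ((M:ℝ))⁻¹) := by
  induction r with
  | zero =>
      intro M hM
      have h0 := tele 0 M (by omega)
      have h1 := h0.mul_left ((M:ℝ))⁻¹
      have h2 : (fun m : ℕ => ((M:ℝ))⁻¹ * (((m:ℝ) + ((0:ℕ):ℝ) + 1)⁻¹ - ((m:ℝ) + M + 1)⁻¹))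
          = fun m : ℕ => aa 0 (m+1) * (((m+1:ℕ):ℝ)⁻¹ * (((m+1:ℕ):ℝ)+M)⁻¹) := by
        funext m
        rw [show aa 0 (m+1) = 1 by simp [aa], one_mul]
        have := winv (N := m+1) hM (by omega)
        push_cast at this ⊢
        rw [← this]
        ring_nf
      rw [h2] at h1
      have h4 : ∑ i ∈ Finset.range 1, aa 0 i * ((i:ℝ)⁻¹ * ((i:ℝ)+M)⁻¹) = 0 := by
        simp [aa_zero]
      have h1' : HasSum (fun m : ℕ => aa 0 (m+1) * (((m+1:ℕ):ℝ)⁻¹ * (((m+1:ℕ):ℝ)+M)⁻¹))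
          (((M:ℝ))⁻¹ * ∑ i ∈ Finset.Ioc 0 M, ((i:ℝ))⁻¹
            - ∑ i ∈ Finset.range 1, aa 0 i * ((i:ℝ)⁻¹ * ((i:ℝ)+M)⁻¹)) := by
        rw [h4, sub_zero]
        exact h1
      have h3 := (hasSum_nat_add_iff' (f := fun N : ℕ =>
        aa 0 N * ((N:ℝ)⁻¹ * ((N:ℝ)+M)⁻¹)) 1).1 h1'
      have h5 : ((M:ℝ))⁻¹ * ∑ i ∈ Finset.Ioc 0 M, ((i:ℝ))⁻¹ = ss 1 M * ((M:ℝ))⁻¹ := by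
        rw [mul_comm]
        congr 1
        show (∑ i ∈ Finset.Ioc 0 M, ((i:ℝ))⁻¹) = ∑ j ∈ Finset.Icc 1 M, ss 0 j * (j : ℝ)⁻¹
        rw [Icc_one_eq_Ioc]
        apply Finset.sum_congr rfl
        intro j hj
        simp only [Finset.mem_Ioc] at hj
        rw [show ss 0 j = 1 by simp only [ss]; rw [if_neg (by omega)], one_mul]
      rwa [h5] at h3
  | succ r ih =>
      intro M hM
      set c : ℕ → ℝ := fun j => aa r j * (j:ℝ)⁻¹ with hc
      set w : ℕ → ℝ := fun N => (N:ℝ)⁻¹ * ((N:ℝ)+M)⁻¹ with hw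
      have hwnn : ∀ N, 0 ≤ w N := fun N => mul_nonneg (by positivity) (by positivity)
      have hcnn : ∀ j, 0 ≤ c j := fun j => mul_nonneg (aa_nonneg r j) (by positivity)
      set PF : ℕ × ℕ → ℝ := fun p => c p.1 * w (p.1 + p.2 + 1) with hPF
      -- fiberwise sums in the second coordinate
      have hA : ∀ j : ℕ, HasSum (fun m : ℕ => PF (j, m))
          (c j * ((M:ℝ))⁻¹ * ∑ i ∈ Finset.Ioc j (j+M), ((i:ℝ))⁻¹) := by
        intro j
        have h0 := (tele j (j+M) (by omega)).mul_left (c j * ((M:ℝ))⁻¹)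
        have h2 : (fun m : ℕ => (c j * ((M:ℝ))⁻¹) *
            (((m:ℝ) + j + 1)⁻¹ - ((m:ℝ) + ((j+M:ℕ):ℝ) + 1)⁻¹)) = fun m : ℕ => PF (j, m) := by
          funext m
          have hj := winv (N := j+m+1) hM (by omega)
          simp only [hPF, hw, hc]
          push_cast at hj ⊢
          rw [mul_assoc, show ((m:ℝ) + j + 1)⁻¹ - ((m:ℝ) + ((j:ℝ)+(M:ℝ)) + 1)⁻¹
            = ((j:ℝ)+m+1)⁻¹ - (((j:ℝ)+m+1)+M)⁻¹ by ring_nf, hj]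
          try ring
        rwa [h2] at h0
      -- summability of the pair family
      have hB : Summable PF := by
        apply (summable_prod_of_nonneg (fun p => mul_nonneg (hcnn p.1) (hwnn _))).2
        refine ⟨fun j => (hA j).summable, ?_⟩
        have hval : (fun j => ∑' m, PF (j, m))
            = fun j => c j * ((M:ℝ))⁻¹ * ∑ i ∈ Finset.Ioc j (j+M), ((i:ℝ))⁻¹ :=
          funext fun j => (hA j).tsum_eq
        rw [hval]
        have hgsum : Summable (fun j : ℕ => (2:ℝ)^r * (((j:ℝ)) ^ ((3:ℝ)/2))⁻¹) :=
          (Real.summable_nat_rpow_inv.2 (by norm_num)).mul_left _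
        have hnn2 : ∀ j : ℕ, 0 ≤ c j * ((M:ℝ))⁻¹ * ∑ i ∈ Finset.Ioc j (j+M), ((i:ℝ))⁻¹ :=
          fun j => mul_nonneg (mul_nonneg (hcnn j) (by positivity))
            (Finset.sum_nonneg fun i _ => by positivity)
        have hle2 : ∀ j : ℕ, c j * ((M:ℝ))⁻¹ * ∑ i ∈ Finset.Ioc j (j+M), ((i:ℝ))⁻¹
            ≤ (2:ℝ)^r * (((j:ℝ)) ^ ((3:ℝ)/2))⁻¹ := by
          intro j
          rcases Nat.eq_zero_or_pos j with rfl | hj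
          · simp [hc, aa_zero]
            try positivity
          · have hj1 : (1:ℝ) ≤ j := by exact_mod_cast hj
            have hj' : (0:ℝ) < j := by exact_mod_cast hj
            have hsum_le : ∑ i ∈ Finset.Ioc j (j+M), ((i:ℝ))⁻¹ ≤ M * ((j:ℝ))⁻¹ := by
              calc ∑ i ∈ Finset.Ioc j (j+M), ((i:ℝ))⁻¹
                  ≤ (Finset.Ioc j (j+M)).card • ((j:ℝ))⁻¹ := by
                    apply Finset.sum_le_card_nsmul
                    intro i hi
                    simp only [Finset.mem_Ioc] at hi
                    apply inv_anti₀ hj'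
                    exact_mod_cast le_of_lt hi.1
                _ = M * ((j:ℝ))⁻¹ := by rw [Nat.card_Ioc, nsmul_eq_mul]; congr 2; omega
            have hM' : (0:ℝ) < M := by exact_mod_cast hM
            calc c j * ((M:ℝ))⁻¹ * ∑ i ∈ Finset.Ioc j (j+M), ((i:ℝ))⁻¹
                ≤ c j * ((M:ℝ))⁻¹ * ((M:ℝ) * ((j:ℝ))⁻¹) := by
                  apply mul_le_mul_of_nonneg_left hsum_le
                    (mul_nonneg (hcnn j) (by positivity))
              _ = c j * ((j:ℝ))⁻¹ := by
                  field_simp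
              _ = aa r j * (((j:ℝ))^(2:ℕ))⁻¹ := by
                  simp only [hc]
                  rw [mul_assoc, ← mul_inv]
                  congr 2
                  ring
              _ ≤ (2^r * Real.sqrt j) * (((j:ℝ))^(2:ℕ))⁻¹ :=
                  mul_le_mul_of_nonneg_right (aa_le r j hj) (by positivity)
              _ = 2^r * (((j:ℝ)) ^ ((3:ℝ)/2))⁻¹ := by rw [mul_assoc, sqrt_mul_inv_pow hj]
        exact Summable.of_nonneg_of_le hnn2 hle2 hgsum
      -- compute the total sum, summing first over j
      have hC : ∑' p : ℕ × ℕ, PF p = ss (r+2) M * ((M:ℝ))⁻¹ := by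
        rw [Summable.tsum_prod' hB (fun j => (hA j).summable)]
        have hval : ∀ j : ℕ, ∑' m, PF (j, m)
            = ∑ m ∈ Finset.Icc 1 M, ((M:ℝ))⁻¹ * (aa r j * ((j:ℝ)⁻¹ * ((j:ℝ)+(m:ℕ))⁻¹)) := by
          intro j
          rw [(hA j).tsum_eq, shift_sum' (fun i => ((i:ℝ))⁻¹) j M, Finset.mul_sum]
          apply Finset.sum_congr rfl
          intro m _
          simp only [hc]
          push_cast
          ring
        have hcols : ∀ m ∈ Finset.Icc 1 M, Summable (fun j : ℕ =>
            ((M:ℝ))⁻¹ * (aa r j * ((j:ℝ)⁻¹ * ((j:ℝ)+(m:ℕ))⁻¹))) := by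
          intro m hm
          simp only [Finset.mem_Icc] at hm
          exact ((ih m hm.1).summable.mul_left _)
        rw [tsum_congr hval, Summable.tsum_finsetSum hcols]
        have hIH : ∀ m ∈ Finset.Icc 1 M,
            ∑' j : ℕ, ((M:ℝ))⁻¹ * (aa r j * ((j:ℝ)⁻¹ * ((j:ℝ)+(m:ℕ))⁻¹))
            = ((M:ℝ))⁻¹ * (ss (r+1) m * ((m:ℝ))⁻¹) := by
          intro m hm
          simp only [Finset.mem_Icc] at hm
          rw [tsum_mul_left, (ih m hm.1).tsum_eq]
        rw [Finset.sum_congr rfl hIH, ← Finset.mul_sum]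
        have : (∑ m ∈ Finset.Icc 1 M, ss (r+1) m * ((m:ℝ))⁻¹) = ss (r+2) M := rfl
        rw [this]
        ring
      -- regroup along the diagonal
      have hPFsum : HasSum PF (ss (r+2) M * ((M:ℝ))⁻¹) := hC ▸ hB.hasSum
      have hsg : HasSum (fun x : Σ N : ℕ, Fin N => PF (e3 x)) (ss (r+2) M * ((M:ℝ))⁻¹) :=
        (e3.hasSum_iff).2 hPFsum
      have hsg' : (fun x : Σ N : ℕ, Fin N => PF (e3 x)) = fun x => c x.2.1 * w x.1 := by
        funext x
        rcases x with ⟨N, i⟩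
        have hi : i.1 < N := i.2
        show PF (i.1, N - i.1 - 1) = c i.1 * w N
        simp only [hPF]
        congr 2
        omega
      rw [hsg'] at hsg
      have hfib : ∀ N : ℕ, HasSum (fun i : Fin N => c i.1 * w N) (aa (r+1) N * w N) := by
        intro N
        have h0 := hasSum_fintype (fun i : Fin N => c i.1 * w N)
        have h1 : ∑ i : Fin N, c i.1 * w N = aa (r+1) N * w N := by
          rw [Fin.sum_univ_eq_sum_range (fun i => c i * w N), ← Finset.sum_mul]
          congr 1
          have haa : aa (r+1) N = ∑ j ∈ Finset.Ioo 0 N, c j := by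
            simp only [hc]
            rfl
          rw [haa]
          refine Eq.symm (Finset.sum_subset ?_ ?_)
          · intro x hx
            simp only [Finset.mem_Ioo] at hx
            simp only [Finset.mem_range]
            omega
          · intro x hx hnx
            simp only [Finset.mem_range] at hx
            simp only [Finset.mem_Ioo] at hnx
            have : x = 0 := by omega
            subst this
            simp [hc, aa_zero]
        rwa [h1] at h0
      have final := hsg.sigma hfib
      simp only [hw] at final
      exact final

lemma alg (k : ℕ) {x y : ℝ} (hx : 0 < x) (hy : 0 < y) :
    ∑ ab ∈ Finset.HasAntidiagonal.antidiagonal k, (-1:ℝ)^ab.2 * ((x^(ab.1+2))⁻¹ * (y^(ab.2+2))⁻¹)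
      = (x^(k+2))⁻¹ * (y⁻¹ * (x+y)⁻¹) + (-1:ℝ)^k * ((y^(k+2))⁻¹ * (x⁻¹ * (x+y)⁻¹)) := by
  have hx' : x ≠ 0 := hx.ne'
  have hy' : y ≠ 0 := hy.ne'
  have hxy : x + y ≠ 0 := by positivity
  rw [Finset.Nat.sum_antidiagonal_eq_sum_range_succ_mk]
  have hstep : ∀ i ∈ Finset.range (k+1), (-1:ℝ)^(k - i) * ((x^(i+2))⁻¹ * (y^(k-i+2))⁻¹)
      = (x⁻¹)^2 * (y⁻¹)^2 * ((x⁻¹)^i * (-y⁻¹)^(k - i)) := by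
    intro i _
    rw [neg_pow y⁻¹, pow_add, pow_add, mul_inv, mul_inv, inv_pow, inv_pow, inv_pow]
    ring
  rw [Finset.sum_congr rfl hstep, ← Finset.mul_sum]
  have hS := geom_sum₂_mul (x⁻¹) (-y⁻¹) (k+1)
  simp only [Nat.add_sub_cancel] at hS
  have hD : x⁻¹ - -y⁻¹ = x⁻¹ + y⁻¹ := by ring
  have hDne : x⁻¹ + y⁻¹ ≠ 0 := by positivity
  rw [hD] at hS
  have hSval : (∑ i ∈ Finset.range (k+1), (x⁻¹)^i * (-y⁻¹)^(k-i))
      = ((x⁻¹)^(k+1) - (-y⁻¹)^(k+1)) / (x⁻¹ + y⁻¹) := by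
    rw [eq_div_iff hDne]
    exact hS
  rw [hSval, neg_pow y⁻¹, inv_pow, inv_pow]
  rw [div_eq_mul_inv]
  simp only [inv_pow]
  field_simp
  ring

lemma pointwise (k r s M N : ℕ) :
    ∑ ab ∈ Finset.HasAntidiagonal.antidiagonal k,
      (-1:ℝ)^ab.2 * (aa r M * (((M:ℝ))^(ab.1+2))⁻¹ * (aa s N * (((N:ℝ))^(ab.2+2))⁻¹))
    = aa r M * (((M:ℝ))^(k+2))⁻¹ * (aa s N * (((N:ℝ))⁻¹ * ((N:ℝ)+(M:ℝ))⁻¹))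
      + (-1:ℝ)^k * (aa s N * (((N:ℝ))^(k+2))⁻¹ *
          (aa r M * (((M:ℝ))⁻¹ * ((M:ℝ)+(N:ℝ))⁻¹))) := by
  rcases Nat.eq_zero_or_pos M with rfl | hM
  · simp [aa_zero]
  rcases Nat.eq_zero_or_pos N with rfl | hN
  · simp [aa_zero]
  have hx : (0:ℝ) < M := by exact_mod_cast hM
  have hy : (0:ℝ) < N := by exact_mod_cast hN
  calc ∑ ab ∈ Finset.HasAntidiagonal.antidiagonal k,
        (-1:ℝ)^ab.2 * (aa r M * (((M:ℝ))^(ab.1+2))⁻¹ * (aa s N * (((N:ℝ))^(ab.2+2))⁻¹))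
      = ∑ ab ∈ Finset.HasAntidiagonal.antidiagonal k, (aa r M * aa s N) *
          ((-1:ℝ)^ab.2 * ((((M:ℝ))^(ab.1+2))⁻¹ * (((N:ℝ))^(ab.2+2))⁻¹)) := by
        apply Finset.sum_congr rfl
        intro ab _
        ring
    _ = (aa r M * aa s N) * ∑ ab ∈ Finset.HasAntidiagonal.antidiagonal k,
          (-1:ℝ)^ab.2 * ((((M:ℝ))^(ab.1+2))⁻¹ * (((N:ℝ))^(ab.2+2))⁻¹) := by
        rw [Finset.mul_sum]
    _ = (aa r M * aa s N) * ((((M:ℝ))^(k+2))⁻¹ * (((N:ℝ))⁻¹ * ((M:ℝ)+(N:ℝ))⁻¹)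
          + (-1:ℝ)^k * ((((N:ℝ))^(k+2))⁻¹ * (((M:ℝ))⁻¹ * ((M:ℝ)+(N:ℝ))⁻¹))) := by
        rw [alg k hx hy]
    _ = _ := by ring

lemma Tlem (k r' s' : ℕ) :
    Summable (fun MN : ℕ × ℕ => aa r' MN.1 * (((MN.1:ℝ))^(k+2))⁻¹ *
        (aa s' MN.2 * (((MN.2:ℝ))⁻¹ * ((MN.2:ℝ)+(MN.1:ℝ))⁻¹)))
    ∧ ∑' MN : ℕ × ℕ, aa r' MN.1 * (((MN.1:ℝ))^(k+2))⁻¹ *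
        (aa s' MN.2 * (((MN.2:ℝ))⁻¹ * ((MN.2:ℝ)+(MN.1:ℝ))⁻¹))
      = ∑' M : ℕ, aa r' M * (((M:ℝ))^(k+3))⁻¹ * ss (s'+1) M := by
  set TF : ℕ × ℕ → ℝ := fun MN => aa r' MN.1 * (((MN.1:ℝ))^(k+2))⁻¹ *
    (aa s' MN.2 * (((MN.2:ℝ))⁻¹ * ((MN.2:ℝ)+(MN.1:ℝ))⁻¹)) with hTFdef
  have hrow : ∀ M : ℕ, HasSum (fun N : ℕ => TF (M, N))
      (aa r' M * (((M:ℝ))^(k+2))⁻¹ * (ss (s'+1) M * ((M:ℝ))⁻¹)) := by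
    intro M
    rcases Nat.eq_zero_or_pos M with rfl | hM
    · have hz : (fun N : ℕ => TF (0, N)) = fun _ => (0:ℝ) := by
        funext N
        simp [hTFdef, aa_zero]
      rw [hz]
      have : aa r' 0 * (((0:ℕ):ℝ)^(k+2))⁻¹ * (ss (s'+1) 0 * (((0:ℕ):ℝ))⁻¹) = 0 := by
        simp [aa_zero]
      rw [this]
      exact hasSum_zero
    · exact (lemL s' M hM).mul_left (aa r' M * (((M:ℝ))^(k+2))⁻¹)
  have hptw : ∀ M : ℕ, aa r' M * (((M:ℝ))^(k+2))⁻¹ * (ss (s'+1) M * ((M:ℝ))⁻¹)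
      = aa r' M * (((M:ℝ))^(k+3))⁻¹ * ss (s'+1) M := by
    intro M
    rcases Nat.eq_zero_or_pos M with rfl | hM
    · simp [aa_zero]
    · rw [show (k+3) = (k+2)+1 from rfl, pow_succ, mul_inv]
      ring
  have hnn : ∀ p : ℕ × ℕ, 0 ≤ TF p := by
    intro p
    exact mul_nonneg (mul_nonneg (aa_nonneg _ _) (by positivity))
      (mul_nonneg (aa_nonneg _ _) (by positivity))
  have hTF : Summable TF := by
    apply (summable_prod_of_nonneg hnn).2
    refine ⟨fun M => (hrow M).summable, ?_⟩
    have : (fun M => ∑' N, TF (M, N))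
        = fun M => aa r' M * (((M:ℝ))^(k+3))⁻¹ * ss (s'+1) M := by
      funext M
      rw [(hrow M).tsum_eq, hptw M]
    rw [this]
    exact summable_aass r' (s'+1) (k+2) (by omega)
  refine ⟨hTF, ?_⟩
  rw [Summable.tsum_prod' hTF (fun M => (hrow M).summable)]
  apply tsum_congr
  intro M
  rw [(hrow M).tsum_eq, hptw M]

theorem stmt2 (p q k : ℕ) (hp : 0 < p) (hq : 0 < q) :
    G (k + 1) (p - 1) q + (-1 : ℝ) ^ k * G (k + 1) (q - 1) p =
      ∑ ab ∈ Finset.HasAntidiagonal.antidiagonal k,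
        (-1 : ℝ) ^ ab.2 * mzv (Fin.snoc (ones (p - 1)) (ab.1 + 2)) *
          mzv (Fin.snoc (ones (q - 1)) (ab.2 + 2)) := by
  obtain ⟨r, rfl⟩ : ∃ r, p = r + 1 := ⟨p - 1, by omega⟩
  obtain ⟨s, rfl⟩ : ∃ s, q = s + 1 := ⟨q - 1, by omega⟩
  show G (k + 1) r (s+1) + (-1 : ℝ) ^ k * G (k + 1) s (r+1) =
      ∑ ab ∈ Finset.HasAntidiagonal.antidiagonal k,
        (-1 : ℝ) ^ ab.2 * mzv (Fin.snoc (ones r) (ab.1 + 2)) *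
          mzv (Fin.snoc (ones s) (ab.2 + 2))
  -- summability of the basic families
  have hfa : ∀ a : ℕ, Summable (fun M : ℕ => aa r M * (((M:ℝ))^(a+2))⁻¹) :=
    fun a => summable_aa_pow r (a+2) (by omega)
  have hgb : ∀ b : ℕ, Summable (fun N : ℕ => aa s N * (((N:ℝ))^(b+2))⁻¹) :=
    fun b => summable_aa_pow s (b+2) (by omega)
  have hfann : ∀ a : ℕ, ∀ M : ℕ, 0 ≤ aa r M * (((M:ℝ))^(a+2))⁻¹ :=
    fun a M => mul_nonneg (aa_nonneg _ _) (by positivity)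
  have hgbnn : ∀ b : ℕ, ∀ N : ℕ, 0 ≤ aa s N * (((N:ℝ))^(b+2))⁻¹ :=
    fun b N => mul_nonneg (aa_nonneg _ _) (by positivity)
  have hprodsumm : ∀ a b : ℕ, Summable (fun MN : ℕ × ℕ =>
      aa r MN.1 * (((MN.1:ℝ))^(a+2))⁻¹ * (aa s MN.2 * (((MN.2:ℝ))^(b+2))⁻¹)) :=
    fun a b => (hfa a).mul_of_nonneg (hgb b) (hfann a) (hgbnn b)
  -- rewrite each summand of the RHS as a double sum
  have hR1 : ∀ ab : ℕ × ℕ,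
      (-1:ℝ)^ab.2 * mzv (Fin.snoc (ones r) (ab.1 + 2)) * mzv (Fin.snoc (ones s) (ab.2 + 2))
      = ∑' MN : ℕ × ℕ, (-1:ℝ)^ab.2 * (aa r MN.1 * (((MN.1:ℝ))^(ab.1+2))⁻¹ *
          (aa s MN.2 * (((MN.2:ℝ))^(ab.2+2))⁻¹)) := by
    intro ab
    rw [mzv_snoc r (ab.1+2) (by omega), mzv_snoc s (ab.2+2) (by omega), mul_assoc,
      Summable.tsum_mul_tsum (hfa ab.1) (hgb ab.2) (hprodsumm ab.1 ab.2), ← tsum_mul_left]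
  have hsummands : ∀ ab ∈ Finset.HasAntidiagonal.antidiagonal k, Summable (fun MN : ℕ × ℕ =>
      (-1:ℝ)^ab.2 * (aa r MN.1 * (((MN.1:ℝ))^(ab.1+2))⁻¹ *
        (aa s MN.2 * (((MN.2:ℝ))^(ab.2+2))⁻¹))) :=
    fun ab _ => (hprodsumm ab.1 ab.2).mul_left _
  have hRHS1 : ∑ ab ∈ Finset.HasAntidiagonal.antidiagonal k,
      (-1:ℝ)^ab.2 * mzv (Fin.snoc (ones r) (ab.1 + 2)) * mzv (Fin.snoc (ones s) (ab.2 + 2))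
      = ∑' MN : ℕ × ℕ, ∑ ab ∈ Finset.HasAntidiagonal.antidiagonal k,
          (-1:ℝ)^ab.2 * (aa r MN.1 * (((MN.1:ℝ))^(ab.1+2))⁻¹ *
            (aa s MN.2 * (((MN.2:ℝ))^(ab.2+2))⁻¹)) := by
    rw [Finset.sum_congr rfl (fun ab _ => hR1 ab)]
    exact (Summable.tsum_finsetSum hsummands).symm
  -- pointwise partial fractions
  have hT1 := Tlem k r s
  have hT2 := Tlem k s r
  have hswapsumm : Summable (fun MN : ℕ × ℕ => aa s MN.2 * (((MN.2:ℝ))^(k+2))⁻¹ *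
      (aa r MN.1 * (((MN.1:ℝ))⁻¹ * ((MN.1:ℝ)+(MN.2:ℝ))⁻¹))) := by
    have := (Equiv.prodComm ℕ ℕ).summable_iff.2 hT2.1
    exact this
  have hRHS2 : ∑' MN : ℕ × ℕ, ∑ ab ∈ Finset.HasAntidiagonal.antidiagonal k,
      (-1:ℝ)^ab.2 * (aa r MN.1 * (((MN.1:ℝ))^(ab.1+2))⁻¹ *
        (aa s MN.2 * (((MN.2:ℝ))^(ab.2+2))⁻¹))
      = (∑' MN : ℕ × ℕ, aa r MN.1 * (((MN.1:ℝ))^(k+2))⁻¹ *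
          (aa s MN.2 * (((MN.2:ℝ))⁻¹ * ((MN.2:ℝ)+(MN.1:ℝ))⁻¹)))
        + (-1:ℝ)^k * ∑' MN : ℕ × ℕ, aa s MN.2 * (((MN.2:ℝ))^(k+2))⁻¹ *
            (aa r MN.1 * (((MN.1:ℝ))⁻¹ * ((MN.1:ℝ)+(MN.2:ℝ))⁻¹)) := by
    rw [tsum_congr (fun MN : ℕ × ℕ => pointwise k r s MN.1 MN.2)]
    rw [Summable.tsum_add hT1.1 (hswapsumm.mul_left ((-1:ℝ)^k)), tsum_mul_left]
  have hswap_eq : ∑' MN : ℕ × ℕ, aa s MN.2 * (((MN.2:ℝ))^(k+2))⁻¹ *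
      (aa r MN.1 * (((MN.1:ℝ))⁻¹ * ((MN.1:ℝ)+(MN.2:ℝ))⁻¹))
      = ∑' MN : ℕ × ℕ, aa s MN.1 * (((MN.1:ℝ))^(k+2))⁻¹ *
          (aa r MN.2 * (((MN.2:ℝ))⁻¹ * ((MN.2:ℝ)+(MN.1:ℝ))⁻¹)) := by
    exact (Equiv.prodComm ℕ ℕ).tsum_eq (fun MN : ℕ × ℕ => aa s MN.1 * (((MN.1:ℝ))^(k+2))⁻¹ *
      (aa r MN.2 * (((MN.2:ℝ))⁻¹ * ((MN.2:ℝ)+(MN.1:ℝ))⁻¹)))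
  -- put everything together
  rw [hRHS1, hRHS2, hswap_eq, hT1.2, hT2.2,
    G_eq (k+1) r (s+1) (by omega), G_eq (k+1) s (r+1) (by omega)]
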